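/- Fix ζ > 0. For all sufficiently large n, the number of formulas C ∈ I*(ζ, n) in which some variable appears (as a positive or negative literal) in fewer than (1/10)·\binom{n−1}{2} clauses of C is less than 2^{0.8·\binom{n}{2}} · I(n−1). -/

import Mathlib

/-- A `k`-clause on `n` Boolean variables: a finite set of literals (variable, sign)
with `k` literals on `k` distinct variables. -/
def IsClause (n k : ℕ) (D : Finset (Fin n × Bool)) : Prop :=
  D.card = k ∧ (D.image Prod.fst).card = k

/-- An assignment `x` satisfies a clause (a conjunction of literals) if it makes
every literal true. -/
def SatClause {n : ℕ} (D : Finset (Fin n × Bool)) (x : Fin n → Bool) : Prop :=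
  ∀ p ∈ D, x p.1 = p.2

/-- A `k`-SAT formula on `n` variables: a nonempty finite set of `k`-clauses,
interpreted as the disjunction of its clauses. -/
def IsFormula (n k : ℕ) (C : Finset (Finset (Fin n × Bool))) : Prop :=
  C.Nonempty ∧ ∀ D ∈ C, IsClause n k D

/-- `F(C)`: the set of satisfying assignments of a formula `C`. -/
def SatSet {n : ℕ} (C : Finset (Finset (Fin n × Bool))) : Set (Fin n → Bool) :=
  {x | ∃ D ∈ C, SatClause D x}

/-- A formula is irredundant if every proper subformula has a strictly smaller
set of satisfying assignments. -/
def Irredundant {n : ℕ} (C : Finset (Finset (Fin n × Bool))) : Prop :=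
  ∀ C' ⊂ C, SatSet C' ⊂ SatSet C

/-- The `k`-SAT functions of `n` variables, identified with their sets of
satisfying assignments. -/
def SatFunctions (n k : ℕ) : Set (Set (Fin n → Bool)) :=
  {S | ∃ C, IsFormula n k C ∧ SatSet C = S}

/-- `G_k(n)`: the number of `k`-SAT functions of `n` variables. -/
noncomputable def numSatFunctions (k n : ℕ) : ℕ := Nat.card (SatFunctions n k)

/-- `I_k(n)`: the number of irredundant `k`-SAT formulas on `n` variables. -/
noncomputable def numIrredundant (k n : ℕ) : ℕ :=
  Nat.card {C : Finset (Finset (Fin n × Bool)) // IsFormula n k C ∧ Irredundant C}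

/-- `w` is a witness for the clause `D` in the formula `C`: it satisfies `D` but
no other clause of `C`. -/
def IsWitness {n : ℕ} (C : Finset (Finset (Fin n × Bool)))
    (D : Finset (Fin n × Bool)) (w : Fin n → Bool) : Prop :=
  SatClause D w ∧ ∀ D' ∈ C, D' ≠ D → ¬ SatClause D' w

/-- Every witness for every clause of `C` has fewer than `ζ n` coordinates
equal to `1`. -/
def SmallWitnesses {n : ℕ} (ζ : ℝ) (C : Finset (Finset (Fin n × Bool))) : Prop :=
  ∀ D ∈ C, ∀ w : Fin n → Bool, IsWitness C D w →
    (((Finset.univ : Finset (Fin n)).filter fun i => w i = true).card : ℝ) < ζ * n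

/-- The multiplicity of the literal `(v, b)` in `C`: the number of clauses of
`C` containing it. -/
def mult {n : ℕ} (C : Finset (Finset (Fin n × Bool))) (v : Fin n) (b : Bool) : ℕ :=
  (C.filter fun D => (v, b) ∈ D).card

/-- `C` is positive if `m(x) ≥ m(x̄)` for every variable `x`. -/
def PositiveFormula {n : ℕ} (C : Finset (Finset (Fin n × Bool))) : Prop :=
  ∀ v : Fin n, mult C v false ≤ mult C v true

/-- `I*(ζ, n)`: the set of irredundant positive 3-SAT formulas on `n` variables
all of whose witnesses have fewer than `ζ n` ones. -/
def Istar (ζ : ℝ) (n : ℕ) : Set (Finset (Finset (Fin n × Bool))) :=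
  {C | IsFormula n 3 C ∧ Irredundant C ∧ PositiveFormula C ∧ SmallWitnesses ζ C}

instance instDecidableIsClause (n k : ℕ) (D : Finset (Fin n × Bool)) :
    Decidable (IsClause n k D) :=
  decidable_of_iff (D.card = k ∧ (D.image Prod.fst).card = k) Iff.rfl

namespace Step0Aux

open Finset

lemma natCard_subtype {α : Type*} [Fintype α] (p : α → Prop) [DecidablePred p] :
    Nat.card {a // p a} = (Finset.univ.filter p).card := by
  rw [Nat.card_eq_fintype_card, Fintype.card_subtype]

lemma card_Px_le (n : ℕ) (x : Fin n) :
    (Finset.univ.filter fun D : Finset (Fin n × Bool) =>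
      ((x, true) ∈ D ∨ (x, false) ∈ D) ∧ IsClause n 3 D).card ≤ 2 * ((2 * n).choose 2) := by
  classical
  have key : ∀ D ∈ (Finset.univ.filter fun D : Finset (Fin n × Bool) =>
      ((x, true) ∈ D ∨ (x, false) ∈ D) ∧ IsClause n 3 D),
      (x, decide ((x, true) ∈ D)) ∈ D := by
    intro D hD
    simp only [Finset.mem_filter, Finset.mem_univ, true_and] at hD
    by_cases h : (x, true) ∈ D
    · simpa [h] using h
    · rcases hD.1 with h1 | h2
      · exact absurd h1 h
      · simpa [h] using h2
  refine le_trans (Finset.card_le_card_of_injOn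
    (t := (Finset.univ : Finset Bool) ×ˢ ((Finset.univ : Finset (Fin n × Bool)).powersetCard 2))
    (fun D : Finset (Fin n × Bool) => (decide ((x, true) ∈ D), D.erase (x, decide ((x, true) ∈ D)))) ?_ ?_) ?_
  · intro D hD
    have hx := key D hD
    simp only [Finset.coe_filter, Set.mem_setOf_eq, Finset.mem_filter, Finset.mem_univ, true_and] at hD
    rw [Finset.mem_coe, Finset.mem_product]
    refine ⟨Finset.mem_univ _, Finset.mem_powersetCard.2 ⟨Finset.subset_univ _, ?_⟩⟩
    rw [Finset.card_erase_of_mem hx, hD.2.1]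
  · intro D hD E hE he
    rw [Finset.mem_coe] at hD hE
    have hb : decide ((x, true) ∈ D) = decide ((x, true) ∈ E) := congrArg Prod.fst he
    have hs : D.erase (x, decide ((x, true) ∈ D)) = E.erase (x, decide ((x, true) ∈ E)) :=
      congrArg Prod.snd he
    calc D = insert (x, decide ((x, true) ∈ D)) (D.erase (x, decide ((x, true) ∈ D))) :=
          (Finset.insert_erase (key D hD)).symm
      _ = insert (x, decide ((x, true) ∈ E)) (E.erase (x, decide ((x, true) ∈ E))) := by
          rw [hb] at hs ⊢; rw [hs]
      _ = E := Finset.insert_erase (key E hE)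
  · rw [Finset.card_product, Finset.card_powersetCard, Finset.card_univ, Finset.card_univ]
    simp only [Fintype.card_bool, Fintype.card_prod, Fintype.card_fin]
    rw [mul_comm n 2]

lemma one_le_numIrredundant (m : ℕ) (hm : 3 ≤ m) : 1 ≤ numIrredundant 3 m := by
  classical
  have h0 : (0 : ℕ) < m := by omega
  have h1 : (1 : ℕ) < m := by omega
  have h2 : (2 : ℕ) < m := by omega
  set D₁ : Finset (Fin m × Bool) :=
    {((⟨0, h0⟩ : Fin m), true), ((⟨1, h1⟩ : Fin m), true), ((⟨2, h2⟩ : Fin m), true)} with hD₁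
  have hcard : D₁.card = 3 := by
    rw [hD₁, Finset.card_insert_of_notMem (by simp [Prod.ext_iff, Fin.ext_iff]),
      Finset.card_insert_of_notMem (by simp [Prod.ext_iff, Fin.ext_iff]),
      Finset.card_singleton]
  have hcard2 : (D₁.image Prod.fst).card = 3 := by
    have himg : D₁.image Prod.fst = {(⟨0, h0⟩ : Fin m), ⟨1, h1⟩, ⟨2, h2⟩} := by
      rw [hD₁]; simp
    rw [himg, Finset.card_insert_of_notMem (by simp [Fin.ext_iff]),
      Finset.card_insert_of_notMem (by simp [Fin.ext_iff]), Finset.card_singleton]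
  have hform : IsFormula m 3 {D₁} := by
    refine ⟨Finset.singleton_nonempty _, ?_⟩
    intro D hD
    rw [Finset.mem_singleton] at hD
    subst hD
    exact ⟨hcard, hcard2⟩
  have hirr : Irredundant ({D₁} : Finset (Finset (Fin m × Bool))) := by
    intro C' hss
    have hC' : C' = ∅ := Finset.ssubset_singleton_iff.1 hss
    have hemp : SatSet (∅ : Finset (Finset (Fin m × Bool))) = ∅ := by
      ext w; simp [SatSet]
    rw [hC', hemp]
    refine Set.empty_ssubset.2 ⟨fun _ => true, D₁, Finset.mem_singleton_self D₁, ?_⟩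
    intro p hp
    rw [hD₁] at hp
    simp only [Finset.mem_insert, Finset.mem_singleton] at hp
    rcases hp with rfl | rfl | rfl <;> rfl
  have hne : Nonempty {C : Finset (Finset (Fin m × Bool)) // IsFormula m 3 C ∧ Irredundant C} :=
    ⟨⟨{D₁}, hform, hirr⟩⟩
  exact Nat.card_pos

lemma nat_pow_bound (m t₀ : ℕ) (h : t₀ ≤ m.choose 2) : 2 * (m+1) * (t₀ + 1) ≤ 2 ^ (3*m+5) := by
  have h1 : m + 1 ≤ 2 ^ (m+1) := (Nat.lt_two_pow_self (n := m+1)).le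
  have hc : m.choose 2 ≤ m * m :=
    le_trans (Nat.choose_two_right m ▸ Nat.div_le_self _ 2)
      (Nat.mul_le_mul_left m (Nat.sub_le m 1))
  have hm2 : m * m ≤ 2 ^ (m + m) := by
    rw [pow_add]
    exact Nat.mul_le_mul (Nat.lt_two_pow_self (n := m)).le (Nat.lt_two_pow_self (n := m)).le
  have h2 : t₀ + 1 ≤ 2 ^ (2*m+1) := by
    have : t₀ ≤ 2 ^ (m + m) := le_trans (le_trans h hc) hm2
    have hone : 1 ≤ 2 ^ (m + m) := Nat.one_le_two_pow
    calc t₀ + 1 ≤ 2 ^ (m+m) + 2 ^ (m+m) := Nat.add_le_add this hone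
      _ = 2 ^ (m + m + 1) := by rw [pow_succ]; omega
      _ = 2 ^ (2*m+1) := by ring_nf
  calc 2 * (m+1) * (t₀+1) ≤ 2 * 2 ^ (m+1) * 2 ^ (2*m+1) :=
        Nat.mul_le_mul (Nat.mul_le_mul_left 2 h1) h2
    _ = 2 ^ (1 + (m+1) + (2*m+1)) := by rw [pow_add, pow_add, pow_one]; ring
    _ ≤ 2 ^ (3*m+5) := Nat.pow_le_pow_right (by norm_num) (by omega)




open Finset

variable {m : ℕ} [NeZero m]

/-- Lift a literal on `Fin m` to one on `Fin (m+1)` avoiding the pivot `x`. -/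
def upL (x : Fin (m+1)) (p : Fin m × Bool) : Fin (m+1) × Bool :=
  (x.succAbove p.1, p.2)

/-- Push a literal on `Fin (m+1)` down to `Fin m` (junk value at the pivot). -/
def downL (x : Fin (m+1)) (p : Fin (m+1) × Bool) : Fin m × Bool :=
  ((finSuccEquiv' x p.1).getD 0, p.2)

lemma succAbove_getD {x j : Fin (m+1)} (h : j ≠ x) :
    x.succAbove ((finSuccEquiv' x j).getD 0) = j := by
  obtain ⟨i, hi⟩ : ∃ i, finSuccEquiv' x j = some i := by
    rcases h' : finSuccEquiv' x j with _ | i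
    · exact absurd ((finSuccEquiv' x).injective (h'.trans (finSuccEquiv'_at x).symm)) h
    · exact ⟨i, rfl⟩
  have h2 := (finSuccEquiv' x).symm_apply_apply j
  rw [hi, finSuccEquiv'_symm_some] at h2
  rw [hi]
  exact h2

lemma downL_upL (x : Fin (m+1)) (p : Fin m × Bool) : downL x (upL x p) = p := by
  simp [downL, upL, finSuccEquiv'_succAbove]

lemma upL_downL (x : Fin (m+1)) (p : Fin (m+1) × Bool) (h : p.1 ≠ x) :
    upL x (downL x p) = p := by
  simp only [upL, downL]
  rw [succAbove_getD h]

/-- Push a clause down to `Fin m`. -/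
def downC (x : Fin (m+1)) (D : Finset (Fin (m+1) × Bool)) : Finset (Fin m × Bool) :=
  D.image (downL x)

/-- Lift a clause up to `Fin (m+1)`. -/
def upC (x : Fin (m+1)) (D : Finset (Fin m × Bool)) : Finset (Fin (m+1) × Bool) :=
  D.image (upL x)

/-- The clause `D` avoids the variable `x`. -/
def Avoids (x : Fin (m+1)) (D : Finset (Fin (m+1) × Bool)) : Prop :=
  ∀ p ∈ D, p.1 ≠ x

lemma upC_downC {x : Fin (m+1)} {D : Finset (Fin (m+1) × Bool)} (h : Avoids x D) :
    upC x (downC x D) = D := by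
  rw [upC, downC, Finset.image_image]
  have : D.image (upL x ∘ downL x) = D.image id :=
    Finset.image_congr (fun p hp => upL_downL x p (h p hp))
  rw [this, Finset.image_id]

lemma downL_injOn {x : Fin (m+1)} {D : Finset (Fin (m+1) × Bool)} (h : Avoids x D) :
    Set.InjOn (downL x) D := by
  intro p hp q hq he
  rw [← upL_downL x p (h p hp), ← upL_downL x q (h q hq), he]

lemma card_downC {x : Fin (m+1)} {D : Finset (Fin (m+1) × Bool)} (h : Avoids x D) :
    (downC x D).card = D.card :=
  Finset.card_image_of_injOn (downL_injOn h)

lemma isClause_downC {x : Fin (m+1)} {D : Finset (Fin (m+1) × Bool)} (h : Avoids x D)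
    (hD : IsClause (m+1) 3 D) : IsClause m 3 (downC x D) := by
  constructor
  · rw [card_downC h, hD.1]
  · have h1 : (downC x D).image Prod.fst
        = (D.image Prod.fst).image (fun j => (finSuccEquiv' x j).getD 0) := by
      rw [downC, Finset.image_image, Finset.image_image]
      rfl
    rw [h1, Finset.card_image_of_injOn, hD.2]
    intro a ha b hb he
    simp only [Finset.coe_image, Set.mem_image, Finset.mem_coe] at ha hb
    obtain ⟨p, hp, rfl⟩ := ha
    obtain ⟨q, hq, rfl⟩ := hb
    simp only at he
    rw [← succAbove_getD (h p hp), ← succAbove_getD (h q hq)]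
    exact congrArg x.succAbove he

lemma satClause_down {x : Fin (m+1)} {D : Finset (Fin (m+1) × Bool)} (h : Avoids x D)
    (w : Fin (m+1) → Bool) (hw : SatClause D w) :
    SatClause (downC x D) (fun i => w (x.succAbove i)) := by
  intro q hq
  obtain ⟨p, hp, rfl⟩ := Finset.mem_image.1 hq
  simp only [downL]
  rw [succAbove_getD (h p hp)]
  exact hw p hp

lemma satClause_up {x : Fin (m+1)} {D : Finset (Fin (m+1) × Bool)} (h : Avoids x D)
    (w : Fin (m+1) → Bool) (hw : SatClause (downC x D) (fun i => w (x.succAbove i))) :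
    SatClause D w := by
  intro p hp
  have hq := hw (downL x p) (Finset.mem_image_of_mem _ hp)
  simpa only [downL, succAbove_getD (h p hp)] using hq

lemma exists_witness {n : ℕ} {C : Finset (Finset (Fin n × Bool))}
    (hirr : Irredundant C) {D : Finset (Fin n × Bool)} (hD : D ∈ C) :
    ∃ w, SatClause D w ∧ ∀ E ∈ C, E ≠ D → ¬ SatClause E w := by
  have h1 : C.erase D ⊂ C := Finset.erase_ssubset hD
  obtain ⟨w, hw1, hw2⟩ := Set.exists_of_ssubset (hirr _ h1)
  obtain ⟨E, hE, hEw⟩ := hw1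
  have hed : E = D := by
    by_contra hne
    exact hw2 ⟨E, Finset.mem_erase.2 ⟨hne, hE⟩, hEw⟩
  exact ⟨w, hed ▸ hEw, fun E' hE' hne hsat => hw2 ⟨E', Finset.mem_erase.2 ⟨hne, hE'⟩, hsat⟩⟩

lemma avoids_of_filter {x : Fin (m+1)} {C : Finset (Finset (Fin (m+1) × Bool))}
    {D : Finset (Fin (m+1) × Bool)}
    (hD : D ∈ C.filter (fun D => ¬((x, true) ∈ D ∨ (x, false) ∈ D))) : Avoids x D := by
  have hnot := (Finset.mem_filter.1 hD).2
  intro p hp hpx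
  apply hnot
  have hpe : p = (x, p.2) := by rw [← hpx]
  cases hb : p.2
  · right; rw [hpe, hb] at hp; exact hp
  · left; rw [hpe, hb] at hp; exact hp

lemma down_good {x : Fin (m+1)} {C : Finset (Finset (Fin (m+1) × Bool))}
    (hf : IsFormula (m+1) 3 C) (hirr : Irredundant C)
    (hne : (C.filter (fun D => ¬((x, true) ∈ D ∨ (x, false) ∈ D))).Nonempty) :
    IsFormula m 3 ((C.filter (fun D => ¬((x, true) ∈ D ∨ (x, false) ∈ D))).image (downC x)) ∧
    Irredundant ((C.filter (fun D => ¬((x, true) ∈ D ∨ (x, false) ∈ D))).image (downC x)) := by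
  classical
  set C₀ := C.filter (fun D => ¬((x, true) ∈ D ∨ (x, false) ∈ D)) with hC₀
  constructor
  · refine ⟨hne.image _, ?_⟩
    intro D' hD'
    obtain ⟨D, hD, rfl⟩ := Finset.mem_image.1 hD'
    exact isClause_downC (avoids_of_filter hD) (hf.2 D (Finset.mem_filter.1 hD).1)
  · intro C'' hss
    have hsub : SatSet C'' ⊆ SatSet (C₀.image (downC x)) := by
      rintro u ⟨E, hE, hEu⟩
      exact ⟨E, hss.subset hE, hEu⟩
    obtain ⟨D', hmem, hnot⟩ := Finset.exists_of_ssubset hss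
    obtain ⟨D, hD₀, rfl⟩ := Finset.mem_image.1 hmem
    obtain ⟨w, hwD, hwo⟩ := exists_witness hirr (Finset.mem_filter.1 hD₀).1
    set u : Fin m → Bool := fun i => w (x.succAbove i) with hu
    have huin : u ∈ SatSet (C₀.image (downC x)) :=
      ⟨downC x D, hmem, satClause_down (avoids_of_filter hD₀) w hwD⟩
    have hunot : u ∉ SatSet C'' := by
      rintro ⟨E'', hE'', hsat⟩
      obtain ⟨E, hE₀, rfl⟩ := Finset.mem_image.1 (hss.subset hE'')
      have hsatE : SatClause E w := satClause_up (avoids_of_filter hE₀) w hsat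
      have hED : E = D := by
        by_contra hne'
        exact hwo E (Finset.mem_filter.1 hE₀).1 hne' hsatE
      rw [hED] at hE''
      exact hnot hE''
    rw [Set.ssubset_def]
    exact ⟨hsub, fun hsup => hunot (hsup huin)⟩




lemma pow_div_factorial_mono (M : ℕ) : ∀ t : ℕ, ∀ s : ℕ, s ≤ t → t ≤ M →
    (M : ℝ) ^ s / (Nat.factorial s) ≤ (M : ℝ) ^ t / (Nat.factorial t) := by
  intro t
  induction t with
  | zero =>
    intro s hs _
    interval_cases s
    exact le_refl _
  | succ t ih =>
    intro s hs htM
    rcases Nat.lt_succ_iff_lt_or_eq.1 (Nat.lt_succ_of_le hs) with h | rfl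
    · have step : (M : ℝ) ^ t / (Nat.factorial t) ≤ (M : ℝ) ^ (t+1) / (Nat.factorial (t+1)) := by
        rw [pow_succ, Nat.factorial_succ]
        have hfp : (0:ℝ) < (Nat.factorial t : ℝ) := by
          exact_mod_cast Nat.factorial_pos t
        have htM' : ((t:ℝ) + 1) ≤ (M:ℝ) := by exact_mod_cast htM
        have hMp : (0:ℝ) ≤ (M:ℝ)^t := by positivity
        rw [div_le_div_iff₀ hfp (by push_cast; positivity)]
        push_cast
        nlinarith [hfp, hMp, mul_le_mul_of_nonneg_left htM' hMp]
      exact le_trans (ih s (by omega) (by omega)) step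
    · exact le_refl _

lemma pow_self_le_aux (t : ℕ) : (t : ℝ) ^ t ≤ 2.8 ^ t * (Nat.factorial t) := by
  induction t with
  | zero => simp
  | succ t ih =>
    rcases Nat.eq_zero_or_pos t with rfl | ht
    · norm_num
    · have h0 : (0:ℝ) < (t:ℝ) := by exact_mod_cast ht
      have key : ((t:ℝ) + 1) ^ t ≤ 2.8 * (t:ℝ) ^ t := by
        have h1 : (1 + 1/(t:ℝ)) ≤ Real.exp (1/(t:ℝ)) := by
          have := Real.add_one_le_exp (1/(t:ℝ)); linarith
        have h2 : ((t:ℝ) + 1) ^ t = (1 + 1/(t:ℝ)) ^ t * (t:ℝ) ^ t := by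
          rw [← mul_pow]
          congr 1
          field_simp
        have h3 : (1 + 1/(t:ℝ)) ^ t ≤ Real.exp (1/(t:ℝ)) ^ t :=
          pow_le_pow_left₀ (by positivity) h1 t
        have h4 : Real.exp (1/(t:ℝ)) ^ t = Real.exp 1 := by
          rw [← Real.exp_nat_mul]
          congr 1
          field_simp
        have h5 : Real.exp 1 ≤ 2.8 := by
          have := Real.exp_one_lt_d9; norm_num at this ⊢; linarith
        have h6 : (0:ℝ) ≤ (t:ℝ)^t := by positivity
        calc ((t:ℝ) + 1) ^ t = (1 + 1/(t:ℝ)) ^ t * (t:ℝ) ^ t := h2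
          _ ≤ Real.exp 1 * (t:ℝ)^t := by rw [← h4]; exact mul_le_mul_of_nonneg_right h3 h6
          _ ≤ 2.8 * (t:ℝ)^t := mul_le_mul_of_nonneg_right h5 h6
      have hfp : (0:ℝ) ≤ (Nat.factorial t : ℝ) := by positivity
      calc ((t+1 : ℕ) : ℝ) ^ (t+1) = ((t:ℝ)+1)^t * ((t:ℝ)+1) := by push_cast; ring
        _ ≤ (2.8 * (t:ℝ)^t) * ((t:ℝ)+1) := by
            apply mul_le_mul_of_nonneg_right key (by positivity)
        _ ≤ (2.8 * (2.8^t * (Nat.factorial t))) * ((t:ℝ)+1) := by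
            apply mul_le_mul_of_nonneg_right _ (by positivity)
            exact mul_le_mul_of_nonneg_left ih (by norm_num)
        _ = 2.8 ^ (t+1) * ((Nat.factorial t) * ((t:ℝ)+1)) := by ring
        _ = 2.8 ^ (t+1) * (Nat.factorial (t+1)) := by
            rw [Nat.factorial_succ]; push_cast; ring

lemma two_thirty_le : (230 : ℝ) ≤ (2:ℝ) ^ (7.9 : ℝ) := by
  have h10 : ((230:ℝ)) ^ (10:ℕ) ≤ ((2:ℝ) ^ (7.9:ℝ)) ^ (10:ℕ) := by
    rw [← Real.rpow_natCast ((2:ℝ) ^ (7.9:ℝ)) 10, ← Real.rpow_mul (by norm_num)]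
    rw [show (7.9:ℝ) * (10:ℕ) = ((79:ℕ):ℝ) by norm_num, Real.rpow_natCast]
    norm_num
  exact le_of_pow_le_pow_left₀ (by norm_num) (by positivity) h10



open Finset in
lemma count_le {m : ℕ} [NeZero m] (t₀ : ℕ)
    (P : Finset (Finset (Fin (m+1) × Bool)) → Prop) [DecidablePred P]
    (xof : Finset (Finset (Fin (m+1) × Bool)) → Fin (m+1))
    (hPform : ∀ C, P C → IsFormula (m+1) 3 C ∧ Irredundant C)
    (hPx : ∀ C, P C →
      (C.filter fun D => (xof C, true) ∈ D ∨ (xof C, false) ∈ D).card ≤ t₀) :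
    (Finset.univ.filter P).card ≤
      (m+1) * ((∑ s ∈ Finset.range (t₀+1), (2 * ((2*(m+1)).choose 2)).choose s) *
        (numIrredundant 3 m + 1)) := by
  classical
  have hrec : ∀ C : Finset (Finset (Fin (m+1) × Bool)),
      C = (C.filter (fun D => (xof C, true) ∈ D ∨ (xof C, false) ∈ D)) ∪
        ((C.filter (fun D => ¬((xof C, true) ∈ D ∨ (xof C, false) ∈ D))).image
          (downC (xof C))).image (upC (xof C)) := by
    intro C
    have h1 : ((C.filter (fun D => ¬((xof C, true) ∈ D ∨ (xof C, false) ∈ D))).image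
        (downC (xof C))).image (upC (xof C))
        = C.filter (fun D => ¬((xof C, true) ∈ D ∨ (xof C, false) ∈ D)) := by
      rw [Finset.image_image]
      calc (C.filter (fun D => ¬((xof C, true) ∈ D ∨ (xof C, false) ∈ D))).image
            (upC (xof C) ∘ downC (xof C))
          = (C.filter (fun D => ¬((xof C, true) ∈ D ∨ (xof C, false) ∈ D))).image id :=
            Finset.image_congr (fun D hD => upC_downC (avoids_of_filter hD))
        _ = _ := Finset.image_id
    rw [h1, Finset.filter_union_filter_not_eq]
  apply le_trans (Finset.card_le_card_of_injOn
    (t := Finset.univ.sigma (fun x : Fin (m+1) =>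
      ((Finset.univ.filter fun D : Finset (Fin (m+1) × Bool) =>
        ((x, true) ∈ D ∨ (x, false) ∈ D) ∧ IsClause (m+1) 3 D).powerset.filter
          (fun S => S.card ≤ t₀)) ×ˢ
      (Finset.univ.filter (fun C' : Finset (Finset (Fin m × Bool)) =>
        (IsFormula m 3 C' ∧ Irredundant C') ∨ C' = ∅))))
    (fun C => ⟨xof C, (C.filter (fun D => (xof C, true) ∈ D ∨ (xof C, false) ∈ D),
      (C.filter (fun D => ¬((xof C, true) ∈ D ∨ (xof C, false) ∈ D))).image
        (downC (xof C)))⟩) ?_ ?_) ?_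
  · -- maps to
    intro C hC
    simp only [Finset.coe_filter, Set.mem_setOf_eq, Finset.mem_filter, Finset.mem_univ, true_and] at hC
    dsimp only
    rw [Finset.mem_coe, Finset.mem_sigma]
    refine ⟨Finset.mem_univ _, ?_⟩
    rw [Finset.mem_product]
    constructor
    · rw [Finset.mem_filter, Finset.mem_powerset]
      constructor
      · intro D hD
        rw [Finset.mem_filter] at hD
        rw [Finset.mem_filter]
        exact ⟨Finset.mem_univ _, hD.2, (hPform C hC).1.2 D hD.1⟩
      · exact hPx C hC
    · rw [Finset.mem_filter]
      refine ⟨Finset.mem_univ _, ?_⟩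
      by_cases h0 : C.filter (fun D => ¬((xof C, true) ∈ D ∨ (xof C, false) ∈ D)) = ∅
      · right; rw [h0, Finset.image_empty]
      · left
        exact down_good (hPform C hC).1 (hPform C hC).2
          (Finset.nonempty_of_ne_empty h0)
  · -- inj on
    intro C1 hC1 C2 hC2 heq
    dsimp only at heq
    have hfst : xof C1 = xof C2 := congrArg Sigma.fst heq
    have hsnd : (C1.filter (fun D => (xof C1, true) ∈ D ∨ (xof C1, false) ∈ D),
        (C1.filter (fun D => ¬((xof C1, true) ∈ D ∨ (xof C1, false) ∈ D))).image
          (downC (xof C1)))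
        = (C2.filter (fun D => (xof C2, true) ∈ D ∨ (xof C2, false) ∈ D),
        (C2.filter (fun D => ¬((xof C2, true) ∈ D ∨ (xof C2, false) ∈ D))).image
          (downC (xof C2))) := eq_of_heq (Sigma.mk.inj_iff.1 heq).2
    rw [Prod.mk.injEq] at hsnd
    obtain ⟨hS, hDn⟩ := hsnd
    calc C1 = (C1.filter (fun D => (xof C1, true) ∈ D ∨ (xof C1, false) ∈ D)) ∪
        ((C1.filter (fun D => ¬((xof C1, true) ∈ D ∨ (xof C1, false) ∈ D))).image
          (downC (xof C1))).image (upC (xof C1)) := hrec C1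
      _ = (C2.filter (fun D => (xof C2, true) ∈ D ∨ (xof C2, false) ∈ D)) ∪
        ((C2.filter (fun D => ¬((xof C2, true) ∈ D ∨ (xof C2, false) ∈ D))).image
          (downC (xof C2))).image (upC (xof C2)) := by rw [hfst] at hS hDn ⊢; rw [hS, hDn]
      _ = C2 := (hrec C2).symm
  · -- cardinality of the target
    rw [Finset.card_sigma]
    have hbound : ∀ x : Fin (m+1),
        ((((Finset.univ.filter fun D : Finset (Fin (m+1) × Bool) =>
          ((x, true) ∈ D ∨ (x, false) ∈ D) ∧ IsClause (m+1) 3 D).powerset.filter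
            (fun S => S.card ≤ t₀)) ×ˢ
        (Finset.univ.filter (fun C' : Finset (Finset (Fin m × Bool)) =>
          (IsFormula m 3 C' ∧ Irredundant C') ∨ C' = ∅))).card)
        ≤ (∑ s ∈ Finset.range (t₀+1), (2 * ((2*(m+1)).choose 2)).choose s) *
            (numIrredundant 3 m + 1) := by
      intro x
      rw [Finset.card_product]
      apply Nat.mul_le_mul
      · -- S part
        apply le_trans (Finset.card_le_card (t := (Finset.range (t₀+1)).biUnion
          (fun s => (Finset.univ.filter fun D : Finset (Fin (m+1) × Bool) =>
            ((x, true) ∈ D ∨ (x, false) ∈ D) ∧ IsClause (m+1) 3 D).powersetCard s)) ?_)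
        · apply le_trans (Finset.card_biUnion_le)
          apply Finset.sum_le_sum
          intro s _
          rw [Finset.card_powersetCard]
          exact Nat.choose_le_choose s (card_Px_le (m+1) x)
        · intro S hS
          rw [Finset.mem_filter, Finset.mem_powerset] at hS
          exact Finset.mem_biUnion.2 ⟨S.card, Finset.mem_range.2 (by omega),
            Finset.mem_powersetCard.2 ⟨hS.1, rfl⟩⟩
      · -- formula part
        have hsub : (Finset.univ.filter (fun C' : Finset (Finset (Fin m × Bool)) =>
            (IsFormula m 3 C' ∧ Irredundant C') ∨ C' = ∅)) ⊆
            insert (∅ : Finset (Finset (Fin m × Bool)))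
              (Finset.univ.filter (fun C' => IsFormula m 3 C' ∧ Irredundant C')) := by
          intro C' hC'
          rw [Finset.mem_filter] at hC'
          rcases hC'.2 with h | rfl
          · exact Finset.mem_insert_of_mem (Finset.mem_filter.2 ⟨Finset.mem_univ _, h⟩)
          · exact Finset.mem_insert_self _ _
        apply le_trans (Finset.card_le_card hsub)
        apply le_trans (Finset.card_insert_le _ _)
        have : numIrredundant 3 m = (Finset.univ.filter
            (fun C' : Finset (Finset (Fin m × Bool)) =>
              IsFormula m 3 C' ∧ Irredundant C')).card := by
          unfold numIrredundant
          exact natCard_subtype _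
        omega
    apply le_trans (Finset.sum_le_sum (fun x _ => hbound x))
    rw [Finset.sum_const, Finset.card_univ, Fintype.card_fin, smul_eq_mul]

end Step0Aux

open Finset Step0Aux in
/-- For fixed `ζ > 0` and all sufficiently large `n`, the number of `C ∈ I*(ζ,n)`
in which some variable appears in fewer than `(1/10)·C(n-1,2)` clauses is less
than `2^{0.8·C(n,2)} · I(n-1)`. -/
theorem step0_low_degree_variable (ζ : ℝ) (hζ : 0 < ζ) :
    ∃ N : ℕ, ∀ n : ℕ, N ≤ n →
      (Nat.card {C : Finset (Finset (Fin n × Bool)) //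
          C ∈ Istar ζ n ∧ ∃ x : Fin n,
            ((C.filter fun D => (x, true) ∈ D ∨ (x, false) ∈ D).card : ℝ)
              < (1 / 10) * ((n - 1).choose 2)} : ℝ)
        < 2 ^ ((0.8 : ℝ) * (n.choose 2 : ℝ)) * (numIrredundant 3 (n - 1) : ℝ) := by
  classical
  refine ⟨10000, fun n hn => ?_⟩
  obtain ⟨m, rfl⟩ : ∃ m, n = m + 1 := ⟨n - 1, by omega⟩
  have hm : 9999 ≤ m := by omega
  haveI : NeZero m := ⟨by omega⟩
  simp only [Nat.add_sub_cancel]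
  set t₀ : ℕ := m.choose 2 / 10 with ht₀def
  set M : ℕ := 2 * ((2 * (m+1)).choose 2) with hMdef
  -- Step 1 : Nat.card → Finset.card
  rw [natCard_subtype (fun C : Finset (Finset (Fin (m+1) × Bool)) =>
    C ∈ Istar ζ (m+1) ∧ ∃ x : Fin (m+1),
      ((C.filter fun D => (x, true) ∈ D ∨ (x, false) ∈ D).card : ℝ)
        < 1 / 10 * ((m.choose 2 : ℕ) : ℝ))]
  -- Step 2 : the counting bound
  have hcount := count_le (m := m) t₀
    (fun C : Finset (Finset (Fin (m+1) × Bool)) =>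
      C ∈ Istar ζ (m+1) ∧ ∃ x : Fin (m+1),
        ((C.filter fun D => (x, true) ∈ D ∨ (x, false) ∈ D).card : ℝ)
          < 1 / 10 * ((m.choose 2 : ℕ) : ℝ))
    (fun C => Classical.epsilon (fun x : Fin (m+1) =>
      ((C.filter fun D => (x, true) ∈ D ∨ (x, false) ∈ D).card : ℝ)
        < 1 / 10 * ((m.choose 2 : ℕ) : ℝ)))
    (by
      intro C hC
      obtain ⟨⟨h1, h2, _⟩, _⟩ := hC
      exact ⟨h1, h2⟩)
    (by
      intro C hC
      try dsimp only
      have hspec := Classical.epsilon_spec hC.2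
      have h10 : ∀ k : ℕ, (k:ℝ) < 1 / 10 * ((m.choose 2 : ℕ) : ℝ) → k ≤ t₀ := by
        intro k hk
        have hk2 : ((k*10 : ℕ):ℝ) < ((m.choose 2 : ℕ):ℝ) := by push_cast; linarith
        have hk3 : k*10 < m.choose 2 := by exact_mod_cast hk2
        omega
      exact h10 _ hspec)
  set B : ℕ := ∑ s ∈ Finset.range (t₀+1), M.choose s with hBdef
  set I : ℕ := numIrredundant 3 m with hIdef
  have hIpos : 1 ≤ I := one_le_numIrredundant m (by omega)
  have hcount' : (((Finset.univ.filter (fun C : Finset (Finset (Fin (m+1) × Bool)) =>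
      C ∈ Istar ζ (m+1) ∧ ∃ x : Fin (m+1),
        ((C.filter fun D => (x, true) ∈ D ∨ (x, false) ∈ D).card : ℝ)
          < 1 / 10 * ((m.choose 2 : ℕ) : ℝ))).card : ℕ) : ℝ)
      ≤ ((m:ℝ)+1) * ((B:ℝ) * ((I:ℝ)+1)) := by
    exact_mod_cast hcount
  -- numeric facts
  have hmr : (9999:ℝ) ≤ (m:ℝ) := by exact_mod_cast hm
  have hm0 : (0:ℝ) ≤ (m:ℝ) := by positivity
  have hm2 : 9999*(m:ℝ) ≤ (m:ℝ)*(m:ℝ) := by nlinarith only [hmr, hm0]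
  have hc2 : ((m.choose 2 : ℕ) : ℝ) = (m:ℝ)*((m:ℝ)-1)/2 := by
    exact_mod_cast Nat.cast_choose_two (K := ℝ) m
  have hM2 : ((M:ℕ):ℝ) = (2*(m:ℝ)+2) * (2*(m:ℝ)+1) := by
    rw [hMdef]
    push_cast [Nat.cast_choose_two]
    ring
  have hct : m.choose 2 ≤ 10 * t₀ + 9 := by omega
  have hct2 : 10 * t₀ ≤ m.choose 2 := by omega
  have ht₀r : ((m.choose 2 : ℕ):ℝ) - 9 ≤ 10*(t₀:ℝ) := by
    have : ((m.choose 2 : ℕ):ℝ) ≤ 10*(t₀:ℝ)+9 := by exact_mod_cast hct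
    linarith
  have ht₀r2 : 10*(t₀:ℝ) ≤ ((m.choose 2 : ℕ):ℝ) := by exact_mod_cast hct2
  have ht₀pos : 0 < t₀ := by
    have h21 : 10 ≤ m.choose 2 := le_trans (by decide) (Nat.choose_le_choose 2 (show 5 ≤ m by omega))
    omega
  have ht₀posr : (0:ℝ) < (t₀:ℝ) := by exact_mod_cast ht₀pos
  have hkey : 2.8 * ((M:ℕ):ℝ) ≤ 230 * (t₀:ℝ) := by nlinarith only [hM2, hc2, ht₀r, hm2, hmr]
  have ht₀M : t₀ ≤ M := by
    have h1 : t₀ ≤ m.choose 2 := Nat.div_le_self _ _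
    have h2 : m.choose 2 ≤ (2*(m+1)).choose 2 := Nat.choose_le_choose 2 (by omega)
    have h3 : (2*(m+1)).choose 2 ≤ M := by rw [hMdef]; omega
    omega
  -- the factorial bound
  have hMt : ((M:ℕ):ℝ)^t₀ / (Nat.factorial t₀) ≤ (230:ℝ)^t₀ := by
    have hfac := pow_self_le_aux t₀
    have hfp : (0:ℝ) < (Nat.factorial t₀ : ℝ) := by exact_mod_cast Nat.factorial_pos t₀
    have h28 : (0:ℝ) < (2.8:ℝ)^t₀ := by positivity
    have hM1 : ((M:ℕ):ℝ) ≤ 230 * (t₀:ℝ) / 2.8 := by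
      rw [le_div_iff₀ (by norm_num : (0:ℝ) < 2.8)]
      linarith
    have hM2' : ((M:ℕ):ℝ)^t₀ ≤ (230 * (t₀:ℝ) / 2.8)^t₀ :=
      pow_le_pow_left₀ (by positivity) hM1 t₀
    have heq : (230*(t₀:ℝ)/2.8)^t₀ = (230:ℝ)^t₀ * ((t₀:ℝ)^t₀ / (2.8:ℝ)^t₀) := by
      rw [div_pow, mul_pow]
      ring
    have hstep : (t₀:ℝ)^t₀/(2.8:ℝ)^t₀ ≤ (Nat.factorial t₀ : ℝ) := by
      rw [div_le_iff₀ h28]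
      linarith [hfac]
    have hfin : ((M:ℕ):ℝ)^t₀ ≤ (230:ℝ)^t₀ * (Nat.factorial t₀ : ℝ) := by
      calc ((M:ℕ):ℝ)^t₀ ≤ (230*(t₀:ℝ)/2.8)^t₀ := hM2'
        _ = (230:ℝ)^t₀ * ((t₀:ℝ)^t₀ / (2.8:ℝ)^t₀) := heq
        _ ≤ (230:ℝ)^t₀ * (Nat.factorial t₀ : ℝ) :=
            mul_le_mul_of_nonneg_left hstep (by positivity)
    rw [div_le_iff₀ hfp]
    exact hfin
  -- sum bound
  have hsum : ((B:ℕ):ℝ) ≤ ((t₀:ℝ)+1) * (230:ℝ)^t₀ := by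
    have hterm : ∀ s ∈ Finset.range (t₀+1), ((M.choose s : ℕ):ℝ) ≤ (230:ℝ)^t₀ := by
      intro s hs
      have h1 : ((M.choose s : ℕ):ℝ) ≤ ((M:ℕ):ℝ)^s / (Nat.factorial s) :=
        Nat.choose_le_pow_div s M
      have h2 := pow_div_factorial_mono M t₀ s (by
        rw [Finset.mem_range] at hs; omega) ht₀M
      linarith
    have := Finset.sum_le_card_nsmul (Finset.range (t₀+1))
      (fun s => ((M.choose s : ℕ):ℝ)) ((230:ℝ)^t₀) hterm
    rw [Finset.card_range, nsmul_eq_mul] at this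
    calc ((B:ℕ):ℝ) = ∑ s ∈ Finset.range (t₀+1), ((M.choose s : ℕ):ℝ) := by
          rw [hBdef]; push_cast; ring
      _ ≤ ((t₀:ℕ)+1 : ℕ) * (230:ℝ)^t₀ := by exact_mod_cast this
      _ = ((t₀:ℝ)+1) * (230:ℝ)^t₀ := by push_cast; ring
  -- the power bound
  have hfinal : 2*((m:ℝ)+1)*((t₀:ℝ)+1)*(230:ℝ)^t₀
      < (2:ℝ) ^ ((0.8:ℝ) * (((m+1).choose 2 : ℕ):ℝ)) := by
    have hnat : 2*(m+1)*(t₀+1) ≤ 2^(3*m+5) :=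
      nat_pow_bound m t₀ (Nat.div_le_self _ _)
    have e2 : 2*((m:ℝ)+1)*((t₀:ℝ)+1) ≤ (2:ℝ)^(((3*m+5:ℕ)):ℝ) := by
      rw [Real.rpow_natCast]
      exact_mod_cast hnat
    have e1 : (230:ℝ)^t₀ ≤ (2:ℝ)^((7.9:ℝ)*(t₀:ℝ)) := by
      calc (230:ℝ)^t₀ ≤ ((2:ℝ)^(7.9:ℝ))^t₀ :=
            pow_le_pow_left₀ (by norm_num) two_thirty_le t₀
        _ = (2:ℝ)^((7.9:ℝ)*(t₀:ℝ)) := by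
            rw [← Real.rpow_natCast ((2:ℝ)^(7.9:ℝ)) t₀, ← Real.rpow_mul (by norm_num)]
    have hch : (((m+1).choose 2 : ℕ) : ℝ) = ((m:ℝ)+1)*(((m:ℝ)+1)-1)/2 := by
      rw [show (((m+1).choose 2 : ℕ) : ℝ) = (((m+1):ℕ):ℝ) * ((((m+1):ℕ):ℝ) - 1) / 2 from
        Nat.cast_choose_two (K := ℝ) (m+1)]
      push_cast
      ring
    calc 2*((m:ℝ)+1)*((t₀:ℝ)+1)*(230:ℝ)^t₀
        ≤ (2:ℝ)^(((3*m+5:ℕ)):ℝ) * (2:ℝ)^((7.9:ℝ)*(t₀:ℝ)) := by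
          apply mul_le_mul e2 e1 (by positivity) (by positivity)
      _ = (2:ℝ)^((((3*m+5:ℕ)):ℝ) + (7.9:ℝ)*(t₀:ℝ)) := (Real.rpow_add (by norm_num) _ _).symm
      _ < (2:ℝ) ^ ((0.8:ℝ) * (((m+1).choose 2 : ℕ):ℝ)) := by
          rw [Real.rpow_lt_rpow_left_iff one_lt_two]
          rw [hch]
          push_cast
          nlinarith only [hc2, ht₀r2, hm2, hmr]
  -- final chain
  have hIr : (0:ℝ) < (I:ℝ) := by
    have : (1:ℝ) ≤ (I:ℝ) := by exact_mod_cast hIpos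
    linarith
  have hI2 : ((I:ℝ)+1) ≤ 2*(I:ℝ) := by
    have : (1:ℝ) ≤ (I:ℝ) := by exact_mod_cast hIpos
    linarith
  calc (((Finset.univ.filter (fun C : Finset (Finset (Fin (m+1) × Bool)) =>
      C ∈ Istar ζ (m+1) ∧ ∃ x : Fin (m+1),
        ((C.filter fun D => (x, true) ∈ D ∨ (x, false) ∈ D).card : ℝ)
          < 1 / 10 * ((m.choose 2 : ℕ) : ℝ))).card : ℕ) : ℝ)
      ≤ ((m:ℝ)+1) * ((B:ℝ) * ((I:ℝ)+1)) := hcount'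
    _ ≤ ((m:ℝ)+1) * ((((t₀:ℝ)+1) * (230:ℝ)^t₀) * (2*(I:ℝ))) := by
        apply mul_le_mul_of_nonneg_left _ (by positivity)
        apply mul_le_mul hsum hI2 (by positivity) (by positivity)
    _ = (2*((m:ℝ)+1)*((t₀:ℝ)+1)*(230:ℝ)^t₀) * (I:ℝ) := by ring
    _ < (2:ℝ) ^ ((0.8:ℝ) * (((m+1).choose 2 : ℕ):ℝ)) * (I:ℝ) :=
        mul_lt_mul_of_pos_right hfinal hIr
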